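/- Let F_q be a finite field. For each pair (n_1, n_2) of integers with 2 ≤ n_1, n_2 ≤ q there exists an optimal (r,δ)-LRC over F_q of length n = n_1n_2 with dimension k, minimum distance d and locality (r,δ) as follows: (1) k = (i+1)(j+1) and d = (n_1−i)(n_2−j), where either i = 0 and 0 ≤ j ≤ n_2−1 with (r,δ) = (1, n_1), or 1 ≤ i ≤ n_1−2 and j = n_2−1 with (r,δ) = (i+1, n_1−i); (2) k = (i+1)(n_2−1)+s+1, d = n_1−s and (r,δ) = (i+1, n_1−i), where max{0, 2i−n_1} ≤ s < i ≤ n_1−2; (3) k = (i+1)j+1, d = n_1(n_2−j) and (r,δ) = (i+1, n_1−i), where 1 ≤ i ≤ n_1−2, 1 ≤ j ≤ n_2−2 and i(n_2−j+1) ≤ n_1. -/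

import Mathlib

set_option linter.unusedSectionVars false
set_option maxHeartbeats 1000000

/-- The code `C ⊆ F^ι` has minimum Hamming distance exactly `d`. -/
def HasMinDist {F ι : Type*} [Field F] [DecidableEq F] [Fintype ι]
    (C : Submodule F (ι → F)) (d : ℕ) : Prop :=
  (∀ c ∈ C, c ≠ 0 → d ≤ hammingNorm c) ∧ ∃ c ∈ C, c ≠ 0 ∧ hammingNorm c = d

/-- The code `C ⊆ F^ι` is an `(r, δ)`-locally recoverable code: every coordinate `i` lies in a
set `R̄` of at most `r + δ - 1` coordinates such that the punctured code `C[R̄]` has minimum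
Hamming distance at least `δ`. -/
def IsLRC {F ι : Type*} [Field F] [DecidableEq F] [DecidableEq ι] [Fintype ι]
    (C : Submodule F (ι → F)) (r δ : ℕ) : Prop :=
  ∀ i : ι, ∃ R : Finset ι, i ∈ R ∧ R.card ≤ r + δ - 1 ∧
    ∀ c ∈ C, (∃ j ∈ R, c j ≠ 0) → δ ≤ (R.filter fun j => c j ≠ 0).card

/-- There exists a linear code over `F` of length `n`, dimension `k` and minimum distance `d`
which is an optimal `(r, δ)`-LRC, i.e. attaining the Singleton-like bound
`k + d + (⌈k/r⌉ - 1)(δ - 1) = n + 1`. -/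
def IsOptimalLRCParams (F : Type*) [Field F] [DecidableEq F] (n k d r δ : ℕ) : Prop :=
  ∃ C : Submodule F (Fin n → F),
    Module.finrank F C = k ∧ HasMinDist C d ∧ IsLRC C r δ ∧
      k + d + ((k + r - 1) / r - 1) * (δ - 1) = n + 1

open Finset Polynomial

section Aux

variable {F : Type*} [Field F] [DecidableEq F]

/-- Univariate weight bound: a nonzero polynomial function of degree ≤ D on m distinct
points has at least m - D nonzero values. -/
lemma uni_lb {m D : ℕ} (hD : D < m) (α : Fin m → F) (hα : Function.Injective α)
    (c : ℕ → F) (hc : ∃ a, a ≤ D ∧ c a ≠ 0) :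
    m - D ≤ (Finset.univ.filter fun x : Fin m =>
      (∑ a ∈ Finset.range (D + 1), c a * α x ^ a) ≠ 0).card := by
  classical
  set p : F[X] := ∑ a ∈ Finset.range (D + 1), Polynomial.C (c a) * Polynomial.X ^ a with hp
  have hcoeff : ∀ a, p.coeff a = if a ∈ Finset.range (D + 1) then c a else 0 := by
    intro a
    rw [hp, Polynomial.finset_sum_coeff]
    simp [Polynomial.coeff_C_mul, Polynomial.coeff_X_pow, eq_comm]
  obtain ⟨a0, ha0, hca0⟩ := hc
  have hpne : p ≠ 0 := by
    intro h
    have := hcoeff a0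
    rw [h] at this
    simp [Finset.mem_range, Nat.lt_succ_of_le ha0] at this
    exact hca0 this.symm
  have hdeg : p.natDegree ≤ D := by
    rw [Polynomial.natDegree_le_iff_coeff_eq_zero]
    intro a ha
    rw [hcoeff]
    simp [Finset.mem_range]
    omega
  have heval : ∀ x : Fin m, p.eval (α x) = ∑ a ∈ Finset.range (D + 1), c a * α x ^ a := by
    intro x
    rw [hp]
    simp [Polynomial.eval_finset_sum]
  have hzcard : (Finset.univ.filter fun x : Fin m => p.eval (α x) = 0).card ≤ D := by
    set Z := Finset.univ.filter fun x : Fin m => p.eval (α x) = 0 with hZ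
    have hsub : Z.image α ⊆ p.roots.toFinset := by
      intro y hy
      obtain ⟨x, hx, rfl⟩ := Finset.mem_image.mp hy
      rw [Multiset.mem_toFinset, Polynomial.mem_roots hpne]
      exact (Finset.mem_filter.mp hx).2
    calc Z.card = (Z.image α).card := (Finset.card_image_of_injective Z hα).symm
      _ ≤ p.roots.toFinset.card := Finset.card_le_card hsub
      _ ≤ Multiset.card p.roots := p.roots.toFinset_card_le
      _ ≤ p.natDegree := p.card_roots'
      _ ≤ D := hdeg
  have hsplit := Finset.card_filter_add_card_filter_not
    (s := (Finset.univ : Finset (Fin m))) (p := fun x => p.eval (α x) = 0)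
  have heq : (Finset.univ.filter fun x : Fin m => ¬ p.eval (α x) = 0).card
      = (Finset.univ.filter fun x : Fin m =>
        (∑ a ∈ Finset.range (D + 1), c a * α x ^ a) ≠ 0).card := by
    apply Finset.card_bij (fun x _ => x) <;> simp [heval]
  rw [← heq]
  simp only [Finset.card_univ, Fintype.card_fin] at hsplit
  omega

lemma uni_zero {m D : ℕ} (hD : D < m) (α : Fin m → F) (hα : Function.Injective α)
    (c : ℕ → F) (h : ∀ x : Fin m, ∑ a ∈ Finset.range (D + 1), c a * α x ^ a = 0) :
    ∀ a, a ≤ D → c a = 0 := by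
  intro a ha
  by_contra hc
  have h1 := uni_lb hD α hα c ⟨a, ha, hc⟩
  have h2 : (Finset.univ.filter fun x : Fin m =>
      (∑ a ∈ Finset.range (D + 1), c a * α x ^ a) ≠ 0) = ∅ := by
    simp [h]
  rw [h2] at h1
  simp at h1
  omega

/-- Bivariate evaluation function for coefficients `g` (`g a b` is the coeff of `x^a y^b`). -/
def wfun {n1 n2 : ℕ} (α : Fin n1 → F) (β : Fin n2 → F) (B : ℕ) (Dx : ℕ → ℕ)
    (g : ℕ → ℕ → F) : Fin n1 × Fin n2 → F :=
  fun p => ∑ b ∈ Finset.range (B + 1),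
    (∑ a ∈ Finset.range (Dx b + 1), g a b * α p.1 ^ a) * β p.2 ^ b

/-- Monomial index set. -/
abbrev MonIdx (B : ℕ) (Dx : ℕ → ℕ) : Type := (b : Fin (B + 1)) × Fin (Dx b.1 + 1)

/-- Monomial functions. -/
def mon {n1 n2 : ℕ} (α : Fin n1 → F) (β : Fin n2 → F) {B : ℕ} {Dx : ℕ → ℕ}
    (m : MonIdx B Dx) : Fin n1 × Fin n2 → F :=
  fun p => α p.1 ^ (m.2 : ℕ) * β p.2 ^ (m.1.1 : ℕ)

lemma sum_mon {n1 n2 : ℕ} (α : Fin n1 → F) (β : Fin n2 → F) (B : ℕ) (Dx : ℕ → ℕ)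
    (g : ℕ → ℕ → F) :
    ∑ m : MonIdx B Dx, g (m.2 : ℕ) (m.1.1 : ℕ) • mon α β m = wfun α β B Dx g := by
  funext p
  rw [Finset.sum_apply]
  show ∑ m ∈ (Finset.univ : Finset ((b : Fin (B+1)) × Fin (Dx b.1 + 1))), _ = _
  rw [← Finset.univ_sigma_univ, Finset.sum_sigma]
  unfold wfun
  rw [← Fin.sum_univ_eq_sum_range (fun b =>
    (∑ a ∈ Finset.range (Dx b + 1), g a b * α p.1 ^ a) * β p.2 ^ b) (B+1)]
  refine Finset.sum_congr rfl fun b _ => ?_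
  rw [Finset.sum_mul,
    ← Fin.sum_univ_eq_sum_range (fun a => g a (b : ℕ) * α p.1 ^ a * β p.2 ^ (b : ℕ)) (Dx b + 1)]
  refine Finset.sum_congr rfl fun a _ => ?_
  simp [mon]
  ring

/-- Truncation of a sigma-indexed coefficient family to a full coefficient function. -/
def truncg (B : ℕ) (Dx : ℕ → ℕ) (g' : MonIdx B Dx → F) : ℕ → ℕ → F :=
  fun a b => if h : b < B + 1 ∧ a < Dx b + 1 then g' ⟨⟨b, h.1⟩, ⟨a, h.2⟩⟩ else 0

lemma truncg_spec (B : ℕ) (Dx : ℕ → ℕ) (g' : MonIdx B Dx → F) (m : MonIdx B Dx) :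
    truncg B Dx g' (m.2 : ℕ) (m.1.1 : ℕ) = g' m := by
  obtain ⟨⟨b, hb⟩, ⟨a, ha⟩⟩ := m
  simp only [truncg]
  rw [dif_pos ⟨hb, ha⟩]

lemma truncg_supp (B : ℕ) (Dx : ℕ → ℕ) (g' : MonIdx B Dx → F) (a b : ℕ)
    (h : B < b ∨ Dx b < a) : truncg B Dx g' a b = 0 := by
  simp only [truncg]
  rw [dif_neg]
  omega

lemma wfun_mem_span {n1 n2 : ℕ} (α : Fin n1 → F) (β : Fin n2 → F) (B : ℕ) (Dx : ℕ → ℕ)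
    (g : ℕ → ℕ → F) :
    wfun α β B Dx g ∈ Submodule.span F (Set.range (mon α β (B := B) (Dx := Dx))) := by
  rw [Submodule.mem_span_range_iff_exists_fun]
  exact ⟨fun m => g (m.2 : ℕ) (m.1.1 : ℕ), sum_mon α β B Dx g⟩

lemma span_mon_imp {n1 n2 : ℕ} (α : Fin n1 → F) (β : Fin n2 → F) (B : ℕ) (Dx : ℕ → ℕ)
    (c : Fin n1 × Fin n2 → F)
    (hc : c ∈ Submodule.span F (Set.range (mon α β (B := B) (Dx := Dx)))) :
    ∃ g : ℕ → ℕ → F, (∀ a b, (B < b ∨ Dx b < a) → g a b = 0) ∧ c = wfun α β B Dx g := by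
  rw [Submodule.mem_span_range_iff_exists_fun] at hc
  obtain ⟨g', hg'⟩ := hc
  refine ⟨truncg B Dx g', truncg_supp B Dx g', ?_⟩
  rw [← hg', ← sum_mon α β B Dx (truncg B Dx g')]
  refine Finset.sum_congr rfl fun m _ => ?_
  rw [truncg_spec]

/-- `wfun` vanishes iff all in-range coefficients do. -/
lemma wfun_zero_coeffs {n1 n2 : ℕ} {α : Fin n1 → F} {β : Fin n2 → F} {B : ℕ} {Dx : ℕ → ℕ}
    (hα : Function.Injective α) (hβ : Function.Injective β)
    (hB : B < n2) (hDx : ∀ b, Dx b < n1)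
    (g : ℕ → ℕ → F) (h : wfun α β B Dx g = 0) :
    ∀ a b, b ≤ B → a ≤ Dx b → g a b = 0 := by
  have step1 : ∀ (x : Fin n1) (b : ℕ), b ≤ B →
      ∑ a ∈ Finset.range (Dx b + 1), g a b * α x ^ a = 0 := by
    intro x b hb
    refine uni_zero hB β hβ (fun b => ∑ a ∈ Finset.range (Dx b + 1), g a b * α x ^ a) ?_ b hb
    intro y
    have := congrFun h (x, y)
    simpa [wfun] using this
  intro a b hb ha
  exact uni_zero (hDx b) α hα (fun a => g a b) (fun x => step1 x b hb) a ha

lemma linearIndependent_mon {n1 n2 : ℕ} {α : Fin n1 → F} {β : Fin n2 → F} {B : ℕ} {Dx : ℕ → ℕ}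
    (hα : Function.Injective α) (hβ : Function.Injective β)
    (hB : B < n2) (hDx : ∀ b, Dx b < n1) :
    LinearIndependent F (mon α β (B := B) (Dx := Dx)) := by
  rw [Fintype.linearIndependent_iff]
  intro g' hg' m
  have hw : wfun α β B Dx (truncg B Dx g') = 0 := by
    rw [← sum_mon]
    rw [← hg']
    refine Finset.sum_congr rfl fun m _ => ?_
    rw [truncg_spec]
  have := wfun_zero_coeffs hα hβ hB hDx _ hw
  rw [← truncg_spec B Dx g' m]
  exact this _ _ (Nat.lt_succ_iff.mp m.1.2) (Nat.lt_succ_iff.mp m.2.2)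

/-- Weight lower bound for a nontrivial polynomial. -/
lemma weight_lb {n1 n2 : ℕ} {α : Fin n1 → F} {β : Fin n2 → F} {B : ℕ} {Dx : ℕ → ℕ}
    (hα : Function.Injective α) (hβ : Function.Injective β)
    (hB : B < n2) (hDx : ∀ b, Dx b < n1)
    (g : ℕ → ℕ → F) (hg : ∃ b a, b ≤ B ∧ a ≤ Dx b ∧ g a b ≠ 0) :
    ∃ b0, b0 ≤ B ∧ (n1 - Dx b0) * (n2 - b0) ≤
      (Finset.univ.filter fun p : Fin n1 × Fin n2 => wfun α β B Dx g p ≠ 0).card := by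
  haveI : DecidablePred fun b => ∃ a, a ≤ Dx b ∧ g a b ≠ 0 :=
    fun _ => Classical.propDecidable _
  set b0 := Nat.findGreatest (fun b => ∃ a, a ≤ Dx b ∧ g a b ≠ 0) B with hb0
  obtain ⟨b1, a1, hb1, ha1, hga1⟩ := hg
  have hPb0 : ∃ a, a ≤ Dx b0 ∧ g a b0 ≠ 0 :=
    Nat.findGreatest_spec (P := fun b => ∃ a, a ≤ Dx b ∧ g a b ≠ 0) hb1 ⟨a1, ha1, hga1⟩
  have hb0B : b0 ≤ B := Nat.findGreatest_le B
  set h : ℕ → Fin n1 → F := fun b x => ∑ a ∈ Finset.range (Dx b + 1), g a b * α x ^ a with hh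
  have htop : ∀ b, b ≤ B → b0 < b → ∀ x, h b x = 0 := by
    intro b hbB hb x
    have h0 := Nat.findGreatest_is_greatest (P := fun b => ∃ a, a ≤ Dx b ∧ g a b ≠ 0)
      (k := b) (by omega) hbB
    have this : ¬∃ a, a ≤ Dx b ∧ g a b ≠ 0 := h0
    push_neg at this
    refine Finset.sum_eq_zero fun a ha => ?_
    rw [this a (by simp at ha; omega)]
    ring
  set Xg := Finset.univ.filter (fun x : Fin n1 => h b0 x ≠ 0) with hXg
  have hXgcard : n1 - Dx b0 ≤ Xg.card := uni_lb (hDx b0) α hα (fun a => g a b0) hPb0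
  have hcolv : ∀ x y, wfun α β B Dx g (x, y) = ∑ b ∈ Finset.range (b0 + 1), h b x * β y ^ b := by
    intro x y
    show ∑ b ∈ Finset.range (B + 1), h b x * β y ^ b = _
    refine (Finset.sum_subset (Finset.range_subset_range.mpr (by omega)) ?_).symm
    intro b hbB hb
    rw [htop b (by simp at hbB; omega) (by simp at hb ⊢; omega) x]
    ring
  have hYcard : ∀ x ∈ Xg, n2 - b0 ≤
      (Finset.univ.filter fun y : Fin n2 => wfun α β B Dx g (x, y) ≠ 0).card := by
    intro x hx
    have hlb := uni_lb (show b0 < n2 by omega) β hβ (fun b => h b x)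
      ⟨b0, le_refl _, (Finset.mem_filter.mp hx).2⟩
    refine le_trans hlb (le_of_eq (congrArg Finset.card ?_))
    exact Finset.filter_congr fun y _ => by rw [hcolv x y]
  refine ⟨b0, hb0B, ?_⟩
  set emb : Fin n1 → Fin n2 ↪ Fin n1 × Fin n2 :=
    fun x => ⟨fun y => (x, y), fun y1 y2 hy => by simpa using hy⟩ with hemb
  set Bu := Xg.biUnion (fun x =>
    (Finset.univ.filter fun y : Fin n2 => wfun α β B Dx g (x, y) ≠ 0).map (emb x)) with hBu
  have hdisj : (Xg : Set (Fin n1)).PairwiseDisjoint (fun x =>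
      (Finset.univ.filter fun y : Fin n2 => wfun α β B Dx g (x, y) ≠ 0).map (emb x)) := by
    intro x1 _ x2 _ hne
    refine Finset.disjoint_left.mpr fun p hp1 hp2 => ?_
    obtain ⟨y1, _, rfl⟩ := Finset.mem_map.mp hp1
    obtain ⟨y2, _, h2⟩ := Finset.mem_map.mp hp2
    exact hne (congrArg Prod.fst h2).symm
  have hsub : Bu ⊆ Finset.univ.filter fun p : Fin n1 × Fin n2 => wfun α β B Dx g p ≠ 0 := by
    intro p hp
    obtain ⟨x, hx, hp⟩ := Finset.mem_biUnion.mp hp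
    obtain ⟨y, hy, rfl⟩ := Finset.mem_map.mp hp
    exact Finset.mem_filter.mpr ⟨Finset.mem_univ _, (Finset.mem_filter.mp hy).2⟩
  calc (n1 - Dx b0) * (n2 - b0) ≤ Xg.card * (n2 - b0) := Nat.mul_le_mul_right _ hXgcard
    _ = ∑ _x ∈ Xg, (n2 - b0) := by rw [Finset.sum_const, smul_eq_mul]
    _ ≤ ∑ x ∈ Xg, (Finset.univ.filter
        fun y : Fin n2 => wfun α β B Dx g (x, y) ≠ 0).card := Finset.sum_le_sum hYcard
    _ = ∑ x ∈ Xg, ((Finset.univ.filter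
        fun y : Fin n2 => wfun α β B Dx g (x, y) ≠ 0).map (emb x)).card :=
        Finset.sum_congr rfl fun x _ => (Finset.card_map _).symm
    _ = Bu.card := (Finset.card_biUnion hdisj).symm
    _ ≤ _ := Finset.card_le_card hsub

lemma card_filter_le_val {m s : ℕ} (hs : s ≤ m) :
    (Finset.univ.filter fun x : Fin m => s ≤ (x : ℕ)).card = m - s := by
  have h1 : (Finset.univ.filter fun x : Fin m => (x : ℕ) < s)
      = (Finset.range s).attachFin (fun a ha => lt_of_lt_of_le (Finset.mem_range.mp ha) hs) := by
    ext x
    simp [Finset.mem_attachFin]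
  have h2 := Finset.card_filter_add_card_filter_not
    (s := (Finset.univ : Finset (Fin m))) (p := fun x : Fin m => (x : ℕ) < s)
  have h3 : (Finset.univ.filter fun x : Fin m => ¬ (x : ℕ) < s)
      = Finset.univ.filter fun x : Fin m => s ≤ (x : ℕ) := by
    ext x; simp [not_lt]
  rw [h1, h3, Finset.card_attachFin, Finset.card_range] at h2
  simp only [Finset.card_univ, Fintype.card_fin] at h2
  omega

/-- The univariate extremal polynomial: vanishing exactly on the first `s` points. -/
lemma exact_uni {m s : ℕ} (hs : s ≤ m) (α : Fin m ↪ F) :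
    ∃ p : F[X], p.natDegree = s ∧ (∀ x : Fin m, p.eval (α x) ≠ 0 ↔ s ≤ (x : ℕ)) := by
  have hUcard : (Finset.univ.filter (fun u : Fin m => (u : ℕ) < s)).card = s := by
    have hle := card_filter_le_val (m := m) (s := s) hs
    have h2 := Finset.card_filter_add_card_filter_not
      (s := (Finset.univ : Finset (Fin m))) (p := fun x : Fin m => (x : ℕ) < s)
    have h3 : (Finset.univ.filter fun x : Fin m => ¬ (x : ℕ) < s)
        = Finset.univ.filter fun x : Fin m => s ≤ (x : ℕ) := by
      ext x; simp [not_lt]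
    rw [h3, hle] at h2
    simp only [Finset.card_univ, Fintype.card_fin] at h2
    omega
  set U := Finset.univ.filter (fun u : Fin m => (u : ℕ) < s) with hU
  refine ⟨∏ u ∈ U, (Polynomial.X - Polynomial.C (α u)), ?_, ?_⟩
  · rw [Polynomial.natDegree_prod_of_monic _ _ (fun u _ => Polynomial.monic_X_sub_C _)]
    simp [Polynomial.natDegree_X_sub_C, hUcard]
  · intro x
    rw [Polynomial.eval_prod]
    rw [Finset.prod_ne_zero_iff]
    constructor
    · intro h
      by_contra hxs
      push_neg at hxs
      have hxU : x ∈ U := Finset.mem_filter.mpr ⟨Finset.mem_univ _, hxs⟩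
      have := h x hxU
      simp at this
    · intro hsx u hu
      simp only [Polynomial.eval_sub, Polynomial.eval_X, Polynomial.eval_C, sub_ne_zero]
      intro heq
      have := α.injective heq
      subst this
      have := (Finset.mem_filter.mp hu).2
      omega

/-- The extremal codeword with weight exactly (n1-s)(n2-t). -/
lemma exact_word {n1 n2 : ℕ} (α : Fin n1 ↪ F) (β : Fin n2 ↪ F) {B : ℕ} {Dx : ℕ → ℕ}
    {s t : ℕ} (hsn : s ≤ n1) (hB : B < n2) (ht : t ≤ B) (hs : ∀ b, b ≤ t → s ≤ Dx b) :
    ∃ g : ℕ → ℕ → F,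
      (Finset.univ.filter fun p : Fin n1 × Fin n2 => wfun α β B Dx g p ≠ 0).card
        = (n1 - s) * (n2 - t) := by
  obtain ⟨p1, hp1deg, hp1ev⟩ := exact_uni hsn α
  obtain ⟨p2, hp2deg, hp2ev⟩ := exact_uni (show t ≤ n2 by omega) β
  refine ⟨fun a b => p1.coeff a * p2.coeff b, ?_⟩
  have hw : ∀ x y, wfun α β B Dx (fun a b => p1.coeff a * p2.coeff b) (x, y)
      = p1.eval (α x) * p2.eval (β y) := by
    intro x y
    show ∑ b ∈ Finset.range (B + 1),
      (∑ a ∈ Finset.range (Dx b + 1), p1.coeff a * p2.coeff b * α x ^ a) * β y ^ b = _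
    have hterm : ∀ b ∈ Finset.range (B + 1),
        (∑ a ∈ Finset.range (Dx b + 1), p1.coeff a * p2.coeff b * α x ^ a) * β y ^ b
          = p1.eval (α x) * (p2.coeff b * β y ^ b) := by
      intro b hb
      rcases le_or_gt b t with hbt | hbt
      · have hdeg : p1.natDegree < Dx b + 1 := by
          rw [hp1deg]; exact Nat.lt_succ_of_le (hs b hbt)
        have hinner : ∑ a ∈ Finset.range (Dx b + 1), p1.coeff a * p2.coeff b * α x ^ a
            = p2.coeff b * ∑ a ∈ Finset.range (Dx b + 1), p1.coeff a * α x ^ a := by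
          rw [Finset.mul_sum]
          exact Finset.sum_congr rfl fun a _ => by ring
        rw [hinner, ← Polynomial.eval_eq_sum_range' hdeg]
        ring
      · have hzero : p2.coeff b = 0 :=
          Polynomial.coeff_eq_zero_of_natDegree_lt (by rw [hp2deg]; omega)
        rw [hzero]
        simp
    rw [Finset.sum_congr rfl hterm, ← Finset.mul_sum]
    congr 1
    exact (Polynomial.eval_eq_sum_range' (n := B + 1) (by omega) _).symm
  have hset : (Finset.univ.filter fun p : Fin n1 × Fin n2 =>
      wfun α β B Dx (fun a b => p1.coeff a * p2.coeff b) p ≠ 0)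
      = (Finset.univ.filter fun x : Fin n1 => s ≤ (x : ℕ)) ×ˢ
        (Finset.univ.filter fun y : Fin n2 => t ≤ (y : ℕ)) := by
    ext ⟨x, y⟩
    simp only [Finset.mem_filter, Finset.mem_univ, true_and, Finset.mem_product]
    rw [hw x y, mul_ne_zero_iff, hp1ev, hp2ev]
  rw [hset, Finset.card_product, card_filter_le_val hsn,
    card_filter_le_val (show t ≤ n2 by omega)]

lemma hammingNorm_equiv {ι κ : Type*} [Fintype ι] [Fintype κ] [DecidableEq ι] [DecidableEq κ]
    (e : ι ≃ κ) (c : κ → F) :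
    hammingNorm (fun idx => c (e idx)) = hammingNorm c := by
  simp only [hammingNorm]
  exact Finset.card_equiv e (fun idx => by simp)

lemma hammingNorm_eq_card {ι : Type*} [Fintype ι] [DecidableEq ι] (c : ι → F) :
    hammingNorm c = (Finset.univ.filter fun p => c p ≠ 0).card := rfl

end Aux
/-- Master construction lemma. -/
lemma master {F : Type*} [Field F] [Fintype F] [DecidableEq F]
    (n1 n2 i B : ℕ) (Dx : ℕ → ℕ)
    (hn1q : n1 ≤ Fintype.card F) (hn2q : n2 ≤ Fintype.card F)
    (hi : i < n1) (hB : B < n2) (hDx : ∀ b, Dx b ≤ i)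
    (k d s t : ℕ)
    (hk : k = ∑ b ∈ Finset.range (B + 1), (Dx b + 1))
    (hdlb : ∀ b, b ≤ B → d ≤ (n1 - Dx b) * (n2 - b))
    (ht : t ≤ B) (hs : ∀ b, b ≤ t → s ≤ Dx b)
    (hd : d = (n1 - s) * (n2 - t))
    (hbound : k + d + ((k + (i + 1) - 1) / (i + 1) - 1) * (n1 - i - 1) = n1 * n2 + 1) :
    IsOptimalLRCParams F (n1 * n2) k d (i + 1) (n1 - i) := by
  obtain ⟨α⟩ : Nonempty (Fin n1 ↪ F) :=
    Function.Embedding.nonempty_of_card_le (by simpa using hn1q)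
  obtain ⟨β⟩ : Nonempty (Fin n2 ↪ F) :=
    Function.Embedding.nonempty_of_card_le (by simpa using hn2q)
  have hDx' : ∀ b, Dx b < n1 := fun b => lt_of_le_of_lt (hDx b) hi
  have hsn1 : s ≤ n1 := le_of_lt (lt_of_le_of_lt (hs 0 (Nat.zero_le t)) (hDx' 0))
  have hdpos : 0 < d := by
    rw [hd]
    have h1 : 0 < n1 - s := by
      have := hs t le_rfl
      have := hDx' t
      omega
    have h2 : 0 < n2 - t := by omega
    positivity
  set e : Fin (n1 * n2) ≃ Fin n1 × Fin n2 := finProdFinEquiv.symm with he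
  set ℓ : (Fin n1 × Fin n2 → F) ≃ₗ[F] (Fin (n1 * n2) → F) :=
    LinearEquiv.funCongrLeft F F e with hℓ
  have hellapp : ∀ (c' : Fin n1 × Fin n2 → F) (idx : Fin (n1 * n2)),
      (ℓ : (Fin n1 × Fin n2 → F) →ₗ[F] (Fin (n1 * n2) → F)) c' idx = c' (e idx) := fun _ _ => rfl
  set C' : Submodule F (Fin n1 × Fin n2 → F) :=
    Submodule.span F (Set.range (mon α β (B := B) (Dx := Dx))) with hC'
  refine ⟨C'.map (ℓ : (Fin n1 × Fin n2 → F) →ₗ[F] (Fin (n1 * n2) → F)), ?_, ?_, ?_, hbound⟩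
  · -- finrank
    have h0 := linearIndependent_mon α.injective β.injective hB hDx'
    have h1 := finrank_span_eq_card h0
    rw [LinearEquiv.finrank_map_eq, hC', h1]
    rw [Fintype.card_sigma]
    simp only [Fintype.card_fin]
    rw [← Fin.sum_univ_eq_sum_range (fun b => Dx b + 1) (B + 1)] at hk
    exact hk.symm
  · -- HasMinDist
    constructor
    · intro c hc hcne
      obtain ⟨c', hc', rfl⟩ := Submodule.mem_map.mp hc
      obtain ⟨g, hgsupp, rfl⟩ := span_mon_imp α β B Dx c' hc'
      have hwne : wfun (F := F) α β B Dx g ≠ 0 := by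
        intro h0
        rw [h0] at hcne
        exact hcne (map_zero _)
      have hnt : ∃ b a, b ≤ B ∧ a ≤ Dx b ∧ g a b ≠ 0 := by
        by_contra hno
        push_neg at hno
        apply hwne
        funext p
        show ∑ b ∈ Finset.range (B + 1), _ = (0 : F)
        refine Finset.sum_eq_zero fun b hb => ?_
        have : ∑ a ∈ Finset.range (Dx b + 1), g a b * α p.1 ^ a = 0 := by
          refine Finset.sum_eq_zero fun a ha => ?_
          rw [hno b a (by simp at hb; omega) (by simp at ha; omega)]
          ring
        rw [this]
        ring
      obtain ⟨b0, hb0, hcard⟩ := weight_lb α.injective β.injective hB hDx' g hnt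
      have habs : (ℓ : (Fin n1 × Fin n2 → F) →ₗ[F] (Fin (n1 * n2) → F)) (wfun α β B Dx g)
          = fun idx => wfun α β B Dx g (e idx) := funext (hellapp _)
      rw [habs, hammingNorm_equiv e, hammingNorm_eq_card]
      exact le_trans (hdlb b0 hb0) hcard
    · obtain ⟨g, hgcard⟩ := exact_word α β hsn1 hB ht hs
      have hwne : wfun (F := F) α β B Dx g ≠ 0 := by
        intro h0
        rw [h0] at hgcard
        have hz : (Finset.univ.filter
            fun p : Fin n1 × Fin n2 => (0 : Fin n1 × Fin n2 → F) p ≠ 0).card = 0 := by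
          simp
        rw [hz] at hgcard
        rw [hd] at hdpos
        omega
      refine ⟨(ℓ : (Fin n1 × Fin n2 → F) →ₗ[F] (Fin (n1 * n2) → F)) (wfun α β B Dx g),
        Submodule.mem_map_of_mem (wfun_mem_span α β B Dx g), ?_, ?_⟩
      · intro h0
        exact hwne (by simpa using (map_eq_zero_iff _ ℓ.injective).mp h0)
      · have habs : (ℓ : (Fin n1 × Fin n2 → F) →ₗ[F] (Fin (n1 * n2) → F)) (wfun α β B Dx g)
            = fun idx => wfun α β B Dx g (e idx) := funext (hellapp _)
        rw [habs, hammingNorm_equiv e, hammingNorm_eq_card, hgcard, hd]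
  · -- IsLRC
    intro idx
    set q0 := e idx with hq0
    set R' : Finset (Fin n1 × Fin n2) := Finset.univ ×ˢ {q0.2} with hR'
    refine ⟨R'.map e.symm.toEmbedding, ?_, ?_, ?_⟩
    · refine Finset.mem_map.mpr ⟨q0, ?_, ?_⟩
      · simp [hR']
      · rw [hq0]
        simp
    · rw [Finset.card_map, hR', Finset.card_product]
      simp
      omega
    · intro c hc hex
      obtain ⟨c', hc', rfl⟩ := Submodule.mem_map.mp hc
      obtain ⟨g, hgsupp, rfl⟩ := span_mon_imp α β B Dx c' hc'
      set coeffs : ℕ → F := fun a => ∑ b ∈ Finset.range (B + 1), g a b * β q0.2 ^ b with hcoeffs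
      have hcolf : ∀ x : Fin n1, wfun α β B Dx g (x, q0.2)
          = ∑ a ∈ Finset.range (i + 1), coeffs a * α x ^ a := by
        intro x
        show ∑ b ∈ Finset.range (B + 1),
          (∑ a ∈ Finset.range (Dx b + 1), g a b * α x ^ a) * β q0.2 ^ b = _
        have step1 : ∀ b ∈ Finset.range (B + 1),
            (∑ a ∈ Finset.range (Dx b + 1), g a b * α x ^ a) * β q0.2 ^ b
              = ∑ a ∈ Finset.range (i + 1), g a b * α x ^ a * β q0.2 ^ b := by
          intro b hb
          rw [← Finset.sum_mul]
          congr 1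
          refine Finset.sum_subset (Finset.range_subset_range.mpr (by have := hDx b; omega)) ?_
          intro a _ ha
          rw [hgsupp a b (Or.inr (by simp at ha; omega))]
          ring
        rw [Finset.sum_congr rfl step1, Finset.sum_comm]
        refine Finset.sum_congr rfl fun a _ => ?_
        rw [hcoeffs, Finset.sum_mul]
        refine Finset.sum_congr rfl fun b _ => ?_
        ring
      have hcne : ∃ a, a ≤ i ∧ coeffs a ≠ 0 := by
        obtain ⟨jdx, hjdx, hcjdx⟩ := hex
        obtain ⟨q, hq, rfl⟩ := Finset.mem_map.mp hjdx
        have hq2 : q.2 = q0.2 := by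
          rw [hR'] at hq
          simpa using (Finset.mem_product.mp hq).2
        have : wfun α β B Dx g q ≠ 0 := by
          rw [hellapp] at hcjdx
          simpa using hcjdx
        by_contra hno
        push_neg at hno
        apply this
        have hq' : q = (q.1, q0.2) := by rw [← hq2]
        rw [hq', hcolf q.1]
        exact Finset.sum_eq_zero fun a ha => by
          rw [hno a (by simp at ha; omega)]; ring
      have huni := uni_lb hi (⇑α) α.injective coeffs hcne
      -- now rewrite the goal's filter card
      have hfilter : ((R'.map e.symm.toEmbedding).filter
          (fun jdx => (ℓ : (Fin n1 × Fin n2 → F) →ₗ[F] (Fin (n1 * n2) → F)) (wfun α β B Dx g) jdx ≠ 0)).card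
          = (Finset.univ.filter fun x : Fin n1 =>
              (∑ a ∈ Finset.range (i + 1), coeffs a * α x ^ a) ≠ 0).card := by
        rw [Finset.filter_map, Finset.card_map]
        refine Finset.card_nbij' (fun q => q.1) (fun x => (x, q0.2)) ?_ ?_ ?_ ?_
        · intro q hq
          simp only [Finset.mem_coe, Finset.mem_filter, Function.comp] at hq
          obtain ⟨hqR, hqne⟩ := hq
          have hq2 : q.2 = q0.2 := by
            rw [hR'] at hqR
            simpa using (Finset.mem_product.mp hqR).2
          simp only [Finset.mem_coe, Finset.mem_filter, Finset.mem_univ, true_and]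
          rw [hellapp] at hqne
          simp only [Equiv.coe_toEmbedding, Equiv.apply_symm_apply] at hqne
          rw [← hcolf q.1]
          have hq' : (q.1, q0.2) = q := by rw [← hq2]
          rw [hq']
          exact hqne
        · intro x hx
          simp only [Finset.mem_coe, Finset.mem_filter, Finset.mem_univ, true_and] at hx
          simp only [Finset.mem_coe, Finset.mem_filter, Function.comp]
          constructor
          · rw [hR']
            simp
          · rw [hellapp]
            simp only [Equiv.coe_toEmbedding, Equiv.apply_symm_apply]
            rw [hcolf x]
            exact hx
        · intro q hq
          simp only [Finset.mem_coe, Finset.mem_filter, Function.comp] at hq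
          have hq2 : q.2 = q0.2 := by
            rw [hR'] at hq
            simpa using (Finset.mem_product.mp hq.1).2
          exact Prod.ext rfl hq2.symm
        · intro x _
          rfl
      rw [hfilter]
      exact huni

/-- Over a finite field `F_q`, for all integers `2 ≤ n₁, n₂ ≤ q` there exist
optimal `(r, δ)`-LRCs of length `n₁n₂` with the three listed families of parameters. -/
theorem optimal_bivariate_params
    {F : Type*} [Field F] [Fintype F] [DecidableEq F]
    (n1 n2 : ℕ) (hn1 : 2 ≤ n1) (hn1q : n1 ≤ Fintype.card F)
    (hn2 : 2 ≤ n2) (hn2q : n2 ≤ Fintype.card F) :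
    (∀ j : ℕ, j ≤ n2 - 1 →
      IsOptimalLRCParams F (n1 * n2) (j + 1) (n1 * (n2 - j)) 1 n1) ∧
    (∀ i : ℕ, 1 ≤ i → i ≤ n1 - 2 →
      IsOptimalLRCParams F (n1 * n2) ((i + 1) * n2) (n1 - i) (i + 1) (n1 - i)) ∧
    (∀ i s : ℕ, 2 * i - n1 ≤ s → s < i → i ≤ n1 - 2 →
      IsOptimalLRCParams F (n1 * n2) ((i + 1) * (n2 - 1) + s + 1) (n1 - s)
        (i + 1) (n1 - i)) ∧
    (∀ i j : ℕ, 1 ≤ i → i ≤ n1 - 2 → 1 ≤ j → j ≤ n2 - 2 → i * (n2 - j + 1) ≤ n1 →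
      IsOptimalLRCParams F (n1 * n2) ((i + 1) * j + 1) (n1 * (n2 - j)) (i + 1) (n1 - i)) := by
  refine ⟨?_, ?_, ?_, ?_⟩
  · -- family 1 : i = 0
    intro j hj
    have h := master (F := F) n1 n2 0 j (fun _ => 0) hn1q hn2q (by omega) (by omega)
      (fun _ => le_rfl) (j + 1) (n1 * (n2 - j)) 0 j
      (by simp)
      (by
        intro b hb
        simp only [Nat.sub_zero]
        have hle : n2 - j ≤ n2 - b := by omega
        exact Nat.mul_le_mul_left n1 hle)
      le_rfl (fun _ _ => le_rfl)
      (by simp)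
      (by
        have hco : (j + 1 + (0 + 1) - 1) / (0 + 1) - 1 = j := by simp
        rw [hco]
        have hd1 : n1 - 0 - 1 = n1 - 1 := by omega
        rw [hd1]
        have h1 : j ≤ n2 := by omega
        have h2 : 1 ≤ n1 := by omega
        zify [h1, h2]
        ring)
    simpa using h
  · -- family 2 : full j = n2 - 1
    intro i hi1 hi2
    have h := master (F := F) n1 n2 i (n2 - 1) (fun _ => i) hn1q hn2q (by omega) (by omega)
      (fun _ => le_rfl) ((i + 1) * n2) (n1 - i) i (n2 - 1)
      (by
        rw [Finset.sum_const, Finset.card_range, smul_eq_mul]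
        have h1 : n2 - 1 + 1 = n2 := by omega
        rw [h1]
        ring)
      (by
        intro b hb
        exact Nat.le_mul_of_pos_right _ (by omega))
      le_rfl (fun _ _ => le_rfl)
      (by
        have h1 : n2 - (n2 - 1) = 1 := by omega
        rw [h1, mul_one])
      (by
        have hdiv : ((i + 1) * n2 + (i + 1) - 1) / (i + 1) = n2 := by
          have h1 : (i + 1) * n2 + (i + 1) - 1 = i + (i + 1) * n2 := by
            have h2 : 1 ≤ i + 1 := by omega
            rw [Nat.add_sub_assoc h2]
            omega
          rw [h1, Nat.add_mul_div_left _ _ (by omega : 0 < i + 1),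
            Nat.div_eq_of_lt (by omega)]
          omega
        rw [hdiv]
        have h1 : i ≤ n1 := by omega
        have h2 : 1 ≤ n1 - i := by omega
        have h3 : 1 ≤ n2 := by omega
        zify [h1, h2, h3]
        ring)
    exact h
  · -- family 3
    intro i s hs1 hs2 hi2
    have h := master (F := F) n1 n2 i (n2 - 1) (fun b => if b = n2 - 1 then s else i)
      hn1q hn2q (by omega) (by omega)
      (fun b => by split <;> omega)
      ((i + 1) * (n2 - 1) + s + 1) (n1 - s) s (n2 - 1)
      (by
        rw [Finset.sum_range_succ]
        have hlast : (if n2 - 1 = n2 - 1 then s else i) + 1 = s + 1 := by simp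
        rw [hlast]
        have hinit : ∑ b ∈ Finset.range (n2 - 1), ((if b = n2 - 1 then s else i) + 1)
            = (n2 - 1) * (i + 1) := by
          rw [Finset.sum_congr rfl (fun b hb => by
            rw [if_neg (by simp at hb; omega)])]
          rw [Finset.sum_const, Finset.card_range, smul_eq_mul]
        rw [hinit]
        generalize n2 - 1 = m
        ring)
      (by
        intro b hb
        split
        · rename_i hbeq
          subst hbeq
          have h1 : n2 - (n2 - 1) = 1 := by omega
          rw [h1, mul_one]
        · rename_i hbne
          have hblt : b < n2 - 1 := by omega
          have h2 : 2 ≤ n2 - b := by omega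
          have h3 : n1 - s ≤ (n1 - i) * 2 := by omega
          refine le_trans h3 (Nat.mul_le_mul_left _ h2))
      le_rfl
      (fun b hb => by split <;> omega)
      (by
        have h1 : n2 - (n2 - 1) = 1 := by omega
        rw [h1, mul_one])
      (by
        have hdiv : ((i + 1) * (n2 - 1) + s + 1 + (i + 1) - 1) / (i + 1) = n2 := by
          have h1 : (i + 1) * (n2 - 1) + s + 1 + (i + 1) - 1
              = (s + i + 1) + (i + 1) * (n2 - 1) := by
            generalize (i + 1) * (n2 - 1) = X
            omega
          rw [h1, Nat.add_mul_div_left _ _ (by omega : 0 < i + 1)]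
          have h2 : (s + i + 1) / (i + 1) = 1 := by
            rw [show s + i + 1 = s + (i + 1) * 1 by ring,
              Nat.add_mul_div_left _ _ (by omega : 0 < i + 1),
              Nat.div_eq_of_lt (by omega)]
          rw [h2]
          omega
        rw [hdiv]
        have h1 : s ≤ n1 := by omega
        have h2 : 1 ≤ n1 - i := by omega
        have h3 : 1 ≤ n2 := by omega
        have h4 : i ≤ n1 := by omega
        zify [h1, h2, h3, h4]
        ring)
    exact h
  · -- family 4
    intro i j hi1 hi2 hj1 hj2 hij
    have h := master (F := F) n1 n2 i j (fun b => if b = j then 0 else i)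
      hn1q hn2q (by omega) (by omega)
      (fun b => by split <;> omega)
      ((i + 1) * j + 1) (n1 * (n2 - j)) 0 j
      (by
        rw [Finset.sum_range_succ]
        have hlast : (if j = j then 0 else i) + 1 = 1 := by simp
        rw [hlast]
        have hinit : ∑ b ∈ Finset.range j, ((if b = j then 0 else i) + 1)
            = j * (i + 1) := by
          rw [Finset.sum_congr rfl (fun b hb => by
            rw [if_neg (by simp at hb; omega)])]
          rw [Finset.sum_const, Finset.card_range, smul_eq_mul]
        rw [hinit]
        ring)
      (by
        intro b hb
        split
        · rename_i hbeq
          subst hbeq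
          simp
        · rename_i hbne
          have hblt : b < j := by omega
          have step1 : n1 * (n2 - j) ≤ (n1 - i) * (n2 - j + 1) := by
            have h1 : i ≤ n1 := by omega
            have h2 : j ≤ n2 := by omega
            zify [h1, h2] at hij ⊢
            nlinarith [hij]
          have step2 : (n1 - i) * (n2 - j + 1) ≤ (n1 - i) * (n2 - b) := by
            refine Nat.mul_le_mul_left _ (by omega)
          exact le_trans step1 step2)
      le_rfl
      (fun b hb => Nat.zero_le _)
      (by simp)
      (by
        have hdiv : ((i + 1) * j + 1 + (i + 1) - 1) / (i + 1) = j + 1 := by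
          have h1 : (i + 1) * j + 1 + (i + 1) - 1 = (i + 1) + (i + 1) * j := by
            generalize (i + 1) * j = X
            omega
          rw [h1, Nat.add_mul_div_left _ _ (by omega : 0 < i + 1),
            Nat.div_self (by omega : 0 < i + 1)]
          omega
        rw [hdiv]
        have hco : j + 1 - 1 = j := by omega
        rw [hco]
        have h1 : j ≤ n2 := by omega
        have h2 : 1 ≤ n1 - i := by omega
        have h3 : i ≤ n1 := by omega
        zify [h1, h2, h3]
        ring)
    exact h
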